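/- Fix c ≥ 1 and set v_n := (2c)^{−|n|} for n ∈ ℤ. Let V be the bounded invertible operator on ℓ²(ℤ,ℂ) with (Vf)(n) = (v_n/v_{n−1})·f(n−1). Then: the set S₀((3c/2)·V) = { f : ‖((3c/2)·V)^N f‖ → 0 } is dense in ℓ²(ℤ,ℂ), while S₀((2/(3c))·(V*)⁻¹) = {0}; likewise S₀((3c/2)·V⁻¹) is dense in ℓ²(ℤ,ℂ), while S₀((2/(3c))·V*) = {0}. -/

import Mathlib

noncomputable section
open Real ContinuousLinearMap Filter

/-- The Hilbert space `ℓ²(ℤ, ℂ)` of square-summable two-sided complex sequences. -/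
abbrev l2 : Type := lp (fun _ : ℤ => ℂ) 2

/-- The set `S₀(T)` of vectors whose orbit under `T` tends to `0` in norm. -/
def S0 (T : l2 →L[ℂ] l2) : Set l2 :=
  {f | Tendsto (fun N : ℕ => ‖(T ^ N) f‖) atTop (nhds 0)}

namespace Stmt15Aux

/-- Coordinate formula for powers of a weighted shift. -/
lemma pow_apply (u : ℤ → ℝ) (hu : ∀ n, u n ≠ 0) (d : ℤ) (A : l2 →L[ℂ] l2)
    (hA : ∀ (f : l2) (n : ℤ), A f n = ((u n / u (n - d) : ℝ) : ℂ) * f (n - d)) :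
    ∀ (N : ℕ) (f : l2) (n : ℤ),
      (A ^ N) f n = ((u n / u (n - (N : ℤ) * d) : ℝ) : ℂ) * f (n - (N : ℤ) * d) := by
  intro N
  induction N with
  | zero => intro f n; simp [div_self (hu n)]
  | succ N ih =>
      intro f n
      have hmul : (A ^ (N + 1)) f = A ((A ^ N) f) := by
        rw [pow_succ']; rfl
      rw [hmul, hA, ih]
      have h1 : n - d - (N : ℤ) * d = n - ((N : ℤ) + 1) * d := by ring
      have h2 : ((N + 1 : ℕ) : ℤ) = ((N : ℤ) + 1) := by push_cast; ring
      rw [h1, h2, ← mul_assoc, ← Complex.ofReal_mul,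
        div_mul_div_cancel₀ (hu (n - d))]

/-- Action of powers of a weighted shift on basis vectors. -/
lemma pow_single (u : ℤ → ℝ) (hu : ∀ n, u n ≠ 0) (d : ℤ) (A : l2 →L[ℂ] l2)
    (hA : ∀ (f : l2) (n : ℤ), A f n = ((u n / u (n - d) : ℝ) : ℂ) * f (n - d))
    (N : ℕ) (k : ℤ) :
    (A ^ N) (lp.single 2 k (1 : ℂ)) =
      ((u (k + (N : ℤ) * d) / u k : ℝ) : ℂ) • lp.single 2 (k + (N : ℤ) * d) (1 : ℂ) := by
  apply lp.ext
  funext n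
  rw [lp.coeFn_smul, Pi.smul_apply, smul_eq_mul]
  rw [pow_apply u hu d A hA N _ n]
  by_cases h : n = k + (N : ℤ) * d
  · subst h
    rw [show k + (N : ℤ) * d - (N : ℤ) * d = k from by ring,
      lp.single_apply_self, lp.single_apply_self]
  · have h1 : n - (N : ℤ) * d ≠ k := fun hh => h (by linarith)
    rw [lp.single_apply_ne _ _ _ h1, lp.single_apply_ne _ _ _ h, mul_zero, mul_zero]

/-- Density of `S₀` for a scaled weighted shift whose weight ratios decay. -/
lemma dense_S0 (u : ℤ → ℝ) (hu : ∀ n, 0 < u n) (d : ℤ) (A : l2 →L[ℂ] l2)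
    (hA : ∀ (f : l2) (n : ℤ), A f n = ((u n / u (n - d) : ℝ) : ℂ) * f (n - d))
    (a : ℝ) (ha : 0 < a)
    (hlim : ∀ k : ℤ, Tendsto (fun N : ℕ => a ^ N * (u (k + (N : ℤ) * d) / u k))
      atTop (nhds 0)) :
    Dense (S0 ((a : ℂ) • A)) := by
  have hu' : ∀ n, u n ≠ 0 := fun n => (hu n).ne'
  intro f
  have hsum := lp.hasSum_single (E := fun _ : ℤ => ℂ) (p := 2) ENNReal.ofNat_ne_top f
  refine mem_closure_of_tendsto hsum (Eventually.of_forall fun s => ?_)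
  show Tendsto (fun N : ℕ => ‖(((a : ℂ) • A) ^ N) (∑ i ∈ s, lp.single 2 i (f i))‖)
    atTop (nhds 0)
  have key : ∀ N : ℕ, ‖(((a : ℂ) • A) ^ N) (∑ i ∈ s, lp.single 2 i (f i))‖
      ≤ ∑ i ∈ s, a ^ N * (u (i + (N : ℤ) * d) / u i) * ‖f i‖ := by
    intro N
    rw [map_sum]
    refine (norm_sum_le _ _).trans (Finset.sum_le_sum fun i _ => ?_)
    have h1 : lp.single 2 i (f i) = (f i) • (lp.single 2 i (1 : ℂ) : l2) := by
      rw [← lp.single_smul, smul_eq_mul, mul_one]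
    rw [h1, smul_pow, smul_apply, map_smul, pow_single u hu' d A hA N i]
    rw [norm_smul, norm_smul, norm_smul]
    have hns : ‖(lp.single 2 (i + (N : ℤ) * d) (1 : ℂ) : l2)‖ = 1 := by
      have := lp.norm_single (E := fun _ : ℤ => ℂ) (p := 2) (by norm_num)
        (i + (N : ℤ) * d) (1 : ℂ)
      simpa using this
    have hr : (0 : ℝ) < u (i + (N : ℤ) * d) / u i := div_pos (hu _) (hu _)
    rw [hns, norm_pow, Complex.norm_real, Complex.norm_real, Real.norm_eq_abs,
      Real.norm_eq_abs, abs_of_pos ha, abs_of_pos hr]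
    apply le_of_eq
    ring
  refine squeeze_zero (fun N => norm_nonneg _) key ?_
  have := tendsto_finset_sum s (fun i _ => (hlim i).mul_const ‖f i‖)
  simpa using this

set_option maxHeartbeats 1000000 in
/-- `S₀` is trivial for a scaled adjoint weighted shift whose weight ratios blow up. -/
lemma S0_adjoint_eq_zero (u : ℤ → ℝ) (hu : ∀ n, 0 < u n) (d : ℤ) (A : l2 →L[ℂ] l2)
    (hA : ∀ (f : l2) (n : ℤ), A f n = ((u n / u (n - d) : ℝ) : ℂ) * f (n - d))
    (a : ℝ) (ha : 0 < a)
    (hlim : ∀ m : ℤ, Tendsto (fun N : ℕ => a ^ N * (u m / u (m - (N : ℤ) * d)))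
      atTop atTop) :
    S0 ((a : ℂ) • adjoint A) = {0} := by
  have hu' : ∀ n, u n ≠ 0 := fun n => (hu n).ne'
  apply Set.eq_singleton_iff_unique_mem.mpr
  constructor
  · show Tendsto _ _ _
    simp only [map_zero, norm_zero]
    exact tendsto_const_nhds
  · intro f hf
    have hf' : Tendsto (fun N : ℕ => ‖(((a : ℂ) • adjoint A) ^ N) f‖) atTop (nhds 0) := hf
    apply lp.ext
    funext m
    rw [lp.coeFn_zero, Pi.zero_apply]
    by_contra hm
    have low : ∀ N : ℕ, a ^ N * (u m / u (m - (N : ℤ) * d)) * ‖f m‖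
        ≤ ‖(((a : ℂ) • adjoint A) ^ N) f‖ := by
      intro N
      have e1 : (((a : ℂ) • adjoint A) ^ N) = ((a : ℂ) ^ N) • adjoint (A ^ N) := by
        rw [smul_pow, ← star_eq_adjoint, ← star_pow, star_eq_adjoint]
      have e2 : (inner ℂ f ((A ^ N) (lp.single 2 (m - (N : ℤ) * d) (1 : ℂ) : l2)) : ℂ)
          = ((u m / u (m - (N : ℤ) * d) : ℝ) : ℂ) * (starRingEnd ℂ) (f m) := by
        rw [pow_single u hu' d A hA N (m - (N : ℤ) * d),
          show m - (N : ℤ) * d + (N : ℤ) * d = m from by ring,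
          inner_smul_right, lp.inner_single_right]
        simp [RCLike.inner_apply]
      have e3 : ‖(inner ℂ ((((a : ℂ) • adjoint A) ^ N) f)
            (lp.single 2 (m - (N : ℤ) * d) (1 : ℂ)) : ℂ)‖
          = a ^ N * (u m / u (m - (N : ℤ) * d)) * ‖f m‖ := by
        rw [e1, smul_apply, inner_smul_left, adjoint_inner_left, e2]
        have hr : (0 : ℝ) < u m / u (m - (N : ℤ) * d) := div_pos (hu _) (hu _)
        have hca : ‖(starRingEnd ℂ) ((a : ℂ) ^ N)‖ = a ^ N := by
          rw [RCLike.norm_conj, norm_pow, Complex.norm_real, Real.norm_eq_abs, abs_of_pos ha]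
        rw [norm_mul, norm_mul, hca, Complex.norm_real, Real.norm_eq_abs, abs_of_pos hr,
          RCLike.norm_conj]
        ring
      have hns : ‖(lp.single 2 (m - (N : ℤ) * d) (1 : ℂ) : l2)‖ = 1 := by
        have := lp.norm_single (E := fun _ : ℤ => ℂ) (p := 2) (by norm_num)
          (m - (N : ℤ) * d) (1 : ℂ)
        simpa using this
      calc a ^ N * (u m / u (m - (N : ℤ) * d)) * ‖f m‖
          = ‖(inner ℂ ((((a : ℂ) • adjoint A) ^ N) f)
              (lp.single 2 (m - (N : ℤ) * d) (1 : ℂ)) : ℂ)‖ := e3.symm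
        _ ≤ ‖(((a : ℂ) • adjoint A) ^ N) f‖ * ‖(lp.single 2 (m - (N : ℤ) * d) (1 : ℂ) : l2)‖ :=
            norm_inner_le_norm (𝕜 := ℂ) _ _
        _ = ‖(((a : ℂ) • adjoint A) ^ N) f‖ := by rw [hns, mul_one]
    have hDiv : Tendsto (fun N : ℕ => a ^ N * (u m / u (m - (N : ℤ) * d)) * ‖f m‖)
        atTop atTop :=
      (hlim m).atTop_mul_const (norm_pos_iff.mpr hm)
    exact not_tendsto_atTop_of_tendsto_nhds hf' (tendsto_atTop_mono low hDiv)

lemma pow_mul_rpow_sub (b : ℝ) (hb : 0 < b) (a : ℝ) (N : ℕ) (t : ℝ) :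
    a ^ N * b ^ (t - (N : ℝ)) = (a / b) ^ N * b ^ t := by
  rw [Real.rpow_sub hb, Real.rpow_natCast, div_pow]
  ring

lemma pow_mul_rpow_add (b : ℝ) (hb : 0 < b) (a : ℝ) (N : ℕ) (t : ℝ) :
    a ^ N * b ^ (t + (N : ℝ)) = (a * b) ^ N * b ^ t := by
  rw [Real.rpow_add hb, Real.rpow_natCast, mul_pow]
  ring

end Stmt15Aux

open Stmt15Aux in
/-- For the weighted bilateral shift `V` with weights `v n = (2c)^(−|n|)` (`c ≥ 1`):
`S₀((3c/2)·V)` and `S₀((3c/2)·V⁻¹)` are dense in `ℓ²(ℤ,ℂ)`, while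
`S₀((2/(3c))·(V*)⁻¹) = {0}` and `S₀((2/(3c))·V*) = {0}`. -/
theorem stmt15 (c : ℝ) (hc : 1 ≤ c)
    (v : ℤ → ℝ) (hv : ∀ n : ℤ, v n = (2 * c) ^ (-|(n : ℝ)|))
    (V : (l2 →L[ℂ] l2)ˣ)
    (hV : ∀ (f : l2) (n : ℤ),
      (V : l2 →L[ℂ] l2) f n = ((v n / v (n - 1) : ℝ) : ℂ) * f (n - 1)) :
    Dense (S0 (((3 * c / 2 : ℝ) : ℂ) • (V : l2 →L[ℂ] l2))) ∧
    S0 (((2 / (3 * c) : ℝ) : ℂ) •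
        adjoint ((V⁻¹ : (l2 →L[ℂ] l2)ˣ) : l2 →L[ℂ] l2)) = {0} ∧
    Dense (S0 (((3 * c / 2 : ℝ) : ℂ) • ((V⁻¹ : (l2 →L[ℂ] l2)ˣ) : l2 →L[ℂ] l2))) ∧
    S0 (((2 / (3 * c) : ℝ) : ℂ) • adjoint (V : l2 →L[ℂ] l2)) = {0} := by
  have hc0 : (0 : ℝ) < c := by linarith
  have hcne : c ≠ 0 := hc0.ne'
  set b : ℝ := 2 * c with hbdef
  have hb0 : (0 : ℝ) < b := by rw [hbdef]; linarith
  have hvpos : ∀ n, 0 < v n := fun n => by rw [hv n]; exact Real.rpow_pos_of_pos hb0 _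
  have hv0 : ∀ n, v n ≠ 0 := fun n => (hvpos n).ne'
  have ha1 : (0 : ℝ) < 3 * c / 2 := by linarith
  have ha2 : (0 : ℝ) < 2 / (3 * c) := by positivity
  have hrat1 : 3 * c / 2 / b = 3 / 4 := by rw [hbdef]; field_simp; ring
  have hrat2 : 2 / (3 * c) * b = 4 / 3 := by rw [hbdef]; field_simp; ring
  -- coordinate formula for V⁻¹
  have hVinv : ∀ (f : l2) (n : ℤ),
      ((V⁻¹ : (l2 →L[ℂ] l2)ˣ) : l2 →L[ℂ] l2) f n
        = ((v n / v (n - (-1)) : ℝ) : ℂ) * f (n - (-1)) := by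
    intro f n
    have h2 : (V : l2 →L[ℂ] l2) (((V⁻¹ : (l2 →L[ℂ] l2)ˣ) : l2 →L[ℂ] l2) f) = f := by
      have h := congrArg (fun T : l2 →L[ℂ] l2 => T f) V.mul_inv
      simpa only [ContinuousLinearMap.mul_apply, ContinuousLinearMap.one_apply] using h
    have h1 := hV (((V⁻¹ : (l2 →L[ℂ] l2)ˣ) : l2 →L[ℂ] l2) f) (n + 1)
    rw [h2, show n + 1 - 1 = n from by ring] at h1
    rw [show n - (-1) = n + 1 from by ring, h1, ← mul_assoc, ← Complex.ofReal_mul,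
      div_mul_div_cancel₀ (hv0 (n + 1)), div_self (hv0 n), Complex.ofReal_one, one_mul]
  -- the four asymptotic facts
  have L1 : ∀ k : ℤ, Tendsto (fun N : ℕ => (3 * c / 2) ^ N * (v (k + (N : ℤ) * 1) / v k))
      atTop (nhds 0) := by
    intro k
    have heq : (fun N : ℕ => (3 * c / 2) ^ N * (v (k + (N : ℤ) * 1) / v k)) =ᶠ[atTop]
        fun N : ℕ => (3 / 4 : ℝ) ^ N * b ^ (|(k : ℝ)| - (k : ℝ)) := by
      filter_upwards [eventually_ge_atTop (-k).toNat] with N hN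
      have hk : -k ≤ (N : ℤ) := Int.toNat_le.mp hN
      have hk0 : (0 : ℝ) ≤ ((k + (N : ℤ) * 1 : ℤ) : ℝ) := by
        have : (0 : ℤ) ≤ k + (N : ℤ) * 1 := by omega
        exact_mod_cast this
      rw [hv (k + (N : ℤ) * 1), hv k, abs_of_nonneg hk0, ← Real.rpow_sub hb0,
        show -((k + (N : ℤ) * 1 : ℤ) : ℝ) - -|(k : ℝ)|
          = (|(k : ℝ)| - (k : ℝ)) - (N : ℝ) from by push_cast; ring,
        pow_mul_rpow_sub b hb0 _ N _, hrat1]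
    refine Tendsto.congr' heq.symm ?_
    simpa using (tendsto_pow_atTop_nhds_zero_of_lt_one (by norm_num : (0:ℝ) ≤ 3/4)
      (by norm_num : (3/4:ℝ) < 1)).mul_const (b ^ (|(k : ℝ)| - (k : ℝ)))
  have L2 : ∀ k : ℤ, Tendsto (fun N : ℕ => (3 * c / 2) ^ N * (v (k + (N : ℤ) * (-1)) / v k))
      atTop (nhds 0) := by
    intro k
    have heq : (fun N : ℕ => (3 * c / 2) ^ N * (v (k + (N : ℤ) * (-1)) / v k)) =ᶠ[atTop]
        fun N : ℕ => (3 / 4 : ℝ) ^ N * b ^ (|(k : ℝ)| + (k : ℝ)) := by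
      filter_upwards [eventually_ge_atTop k.toNat] with N hN
      have hk : k ≤ (N : ℤ) := Int.toNat_le.mp hN
      have hk0 : ((k + (N : ℤ) * (-1) : ℤ) : ℝ) ≤ 0 := by
        have : k + (N : ℤ) * (-1) ≤ 0 := by omega
        exact_mod_cast this
      rw [hv (k + (N : ℤ) * (-1)), hv k, abs_of_nonpos hk0, ← Real.rpow_sub hb0,
        show -(-((k + (N : ℤ) * (-1) : ℤ) : ℝ)) - -|(k : ℝ)|
          = (|(k : ℝ)| + (k : ℝ)) - (N : ℝ) from by push_cast; ring,
        pow_mul_rpow_sub b hb0 _ N _, hrat1]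
    refine Tendsto.congr' heq.symm ?_
    simpa using (tendsto_pow_atTop_nhds_zero_of_lt_one (by norm_num : (0:ℝ) ≤ 3/4)
      (by norm_num : (3/4:ℝ) < 1)).mul_const (b ^ (|(k : ℝ)| + (k : ℝ)))
  have L3 : ∀ m : ℤ, Tendsto (fun N : ℕ => (2 / (3 * c)) ^ N * (v m / v (m - (N : ℤ) * (-1))))
      atTop atTop := by
    intro m
    have heq : (fun N : ℕ => (2 / (3 * c)) ^ N * (v m / v (m - (N : ℤ) * (-1)))) =ᶠ[atTop]
        fun N : ℕ => (4 / 3 : ℝ) ^ N * b ^ ((m : ℝ) - |(m : ℝ)|) := by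
      filter_upwards [eventually_ge_atTop (-m).toNat] with N hN
      have hk : -m ≤ (N : ℤ) := Int.toNat_le.mp hN
      have hk0 : (0 : ℝ) ≤ ((m - (N : ℤ) * (-1) : ℤ) : ℝ) := by
        have : (0 : ℤ) ≤ m - (N : ℤ) * (-1) := by omega
        exact_mod_cast this
      rw [hv m, hv (m - (N : ℤ) * (-1)), abs_of_nonneg hk0, ← Real.rpow_sub hb0,
        show -|(m : ℝ)| - -((m - (N : ℤ) * (-1) : ℤ) : ℝ)
          = ((m : ℝ) - |(m : ℝ)|) + (N : ℝ) from by push_cast; ring,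
        pow_mul_rpow_add b hb0 _ N _, hrat2]
    refine Tendsto.congr' heq.symm ?_
    exact (tendsto_pow_atTop_atTop_of_one_lt (by norm_num : (1:ℝ) < 4/3)).atTop_mul_const
      (Real.rpow_pos_of_pos hb0 _)
  have L4 : ∀ m : ℤ, Tendsto (fun N : ℕ => (2 / (3 * c)) ^ N * (v m / v (m - (N : ℤ) * 1)))
      atTop atTop := by
    intro m
    have heq : (fun N : ℕ => (2 / (3 * c)) ^ N * (v m / v (m - (N : ℤ) * 1))) =ᶠ[atTop]
        fun N : ℕ => (4 / 3 : ℝ) ^ N * b ^ (-(m : ℝ) - |(m : ℝ)|) := by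
      filter_upwards [eventually_ge_atTop m.toNat] with N hN
      have hk : m ≤ (N : ℤ) := Int.toNat_le.mp hN
      have hk0 : ((m - (N : ℤ) * 1 : ℤ) : ℝ) ≤ 0 := by
        have : m - (N : ℤ) * 1 ≤ 0 := by omega
        exact_mod_cast this
      rw [hv m, hv (m - (N : ℤ) * 1), abs_of_nonpos hk0, ← Real.rpow_sub hb0,
        show -|(m : ℝ)| - -(-((m - (N : ℤ) * 1 : ℤ) : ℝ))
          = (-(m : ℝ) - |(m : ℝ)|) + (N : ℝ) from by push_cast; ring,
        pow_mul_rpow_add b hb0 _ N _, hrat2]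
    refine Tendsto.congr' heq.symm ?_
    exact (tendsto_pow_atTop_atTop_of_one_lt (by norm_num : (1:ℝ) < 4/3)).atTop_mul_const
      (Real.rpow_pos_of_pos hb0 _)
  exact ⟨dense_S0 v hvpos 1 (V : l2 →L[ℂ] l2) hV (3 * c / 2) ha1 L1,
    S0_adjoint_eq_zero v hvpos (-1) ((V⁻¹ : (l2 →L[ℂ] l2)ˣ) : l2 →L[ℂ] l2) hVinv
      (2 / (3 * c)) ha2 L3,
    dense_S0 v hvpos (-1) ((V⁻¹ : (l2 →L[ℂ] l2)ˣ) : l2 →L[ℂ] l2) hVinv (3 * c / 2) ha1 L2,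
    S0_adjoint_eq_zero v hvpos 1 (V : l2 →L[ℂ] l2) hV (2 / (3 * c)) ha2 L4⟩
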